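/- Let f : (0,ε) → C be differentiable with valuation val(f) = k ≥ 1 at 0 (i.e., k is minimal with lim_{t→0⁺} f(t)/t^k existing and nonzero), and suppose lim_{t→0⁺} f'(t)/t^{k-1} exists. Then val(f') = k - 1 and lim_{t→0⁺} f'(t)/t^{k-1} = k·lim_{t→0⁺} f(t)/t^k. -/

import Mathlib

open Filter Topology

/-- `f` has valuation `k` at `0`: `k` is the least nonnegative integer such that
`f t / t ^ k` tends to a nonzero limit as `t → 0⁺`. -/
def HasValuation (f : ℝ → ℂ) (k : ℕ) : Prop :=
  (∃ L : ℂ, L ≠ 0 ∧ Tendsto (fun t : ℝ => f t / (t : ℂ) ^ k) (𝓝[>] 0) (𝓝 L)) ∧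
  ∀ j : ℕ, j < k →
    ¬ ∃ L : ℂ, L ≠ 0 ∧ Tendsto (fun t : ℝ => f t / (t : ℂ) ^ j) (𝓝[>] 0) (𝓝 L)

lemma key_lhopital (f : ℝ → ℂ) (ε : ℝ) (hε : 0 < ε)
    (hdiff : ∀ t ∈ Set.Ioo 0 ε, DifferentiableAt ℝ f t)
    (hf0 : Tendsto f (𝓝[>] 0) (𝓝 0))
    (j : ℕ) (C : ℂ)
    (hC : Tendsto (fun t : ℝ => deriv f t / (t : ℂ) ^ j) (𝓝[>] 0) (𝓝 C)) :
    Tendsto (fun t : ℝ => f t / (t : ℂ) ^ (j + 1)) (𝓝[>] 0) (𝓝 (C / ((j : ℂ) + 1))) := by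
  have hj1 : ((j : ℂ) + 1) ≠ 0 := by
    exact_mod_cast Nat.cast_add_one_ne_zero (R := ℂ) j
  set g : ℝ → ℂ := fun t => f t - (C / ((j : ℂ) + 1)) * (t : ℂ) ^ (j + 1) with hgdef
  have hpow : ∀ t : ℝ, HasDerivAt (fun t : ℝ => ((t : ℂ)) ^ (j + 1))
      (((j : ℂ) + 1) * (t : ℂ) ^ j) t := by
    intro t
    have h := (hasDerivAt_pow (j + 1) ((t : ℝ) : ℂ)).comp_ofReal
    simpa using h
  have hg' : ∀ t ∈ Set.Ioo (0 : ℝ) ε,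
      HasDerivAt g (deriv f t - C * (t : ℂ) ^ j) t := by
    intro t ht
    have h1 := (hdiff t ht).hasDerivAt
    have h2 := (hpow t).const_mul (C / ((j : ℂ) + 1))
    have : (C / ((j : ℂ) + 1)) * (((j : ℂ) + 1) * (t : ℂ) ^ j) = C * (t : ℂ) ^ j := by
      field_simp
    rw [this] at h2
    exact h1.sub h2
  have hg0 : Tendsto g (𝓝[>] 0) (𝓝 0) := by
    have hp : Tendsto (fun t : ℝ => (C / ((j : ℂ) + 1)) * (t : ℂ) ^ (j + 1)) (𝓝[>] 0)
        (𝓝 0) := by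
      have : ContinuousAt (fun t : ℝ => (C / ((j : ℂ) + 1)) * (t : ℂ) ^ (j + 1)) 0 := by
        fun_prop
      have h := this.continuousWithinAt (s := Set.Ioi (0:ℝ))
      simpa using h.tendsto
    simpa using hf0.sub hp
  -- main estimate
  have hgz : Tendsto (fun t : ℝ => g t / (t : ℂ) ^ (j + 1)) (𝓝[>] 0) (𝓝 0) := by
    rw [NormedAddCommGroup.tendsto_nhds_zero]
    intro δ hδ
    have hδ2 : (0:ℝ) < δ / 2 := by linarith
    -- eventual bound on the derivative
    have hev : ∀ᶠ t in 𝓝[>] (0:ℝ), ‖deriv f t / (t : ℂ) ^ j - C‖ < δ / 2 := by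
      have := (hC.sub tendsto_const_nhds (b := C))
      rw [sub_self, NormedAddCommGroup.tendsto_nhds_zero] at this
      exact this (δ / 2) hδ2
    obtain ⟨a, ha0, ha⟩ := (nhdsGT_basis (0:ℝ)).eventually_iff.mp hev
    set b := min a ε with hbdef
    have hb0 : 0 < b := lt_min ha0 hε
    -- pointwise derivative bound on (0, b)
    have hbound : ∀ x ∈ Set.Ioo (0:ℝ) b, ‖deriv f x - C * (x : ℂ) ^ j‖ ≤ δ / 2 * x ^ j := by
      intro x hx
      have hxa : x ∈ Set.Ioo (0:ℝ) a := ⟨hx.1, lt_of_lt_of_le hx.2 (min_le_left _ _)⟩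
      have h := le_of_lt (ha hxa)
      have hxpos := hx.1
      have hxc : ((x : ℂ)) ^ j ≠ 0 := by
        simp [Complex.ofReal_ne_zero.mpr (ne_of_gt hxpos)]
      have heq : deriv f x - C * (x : ℂ) ^ j = (deriv f x / (x : ℂ) ^ j - C) * (x : ℂ) ^ j := by
        field_simp
      rw [heq, norm_mul]
      have hnx : ‖((x : ℂ)) ^ j‖ = x ^ j := by
        rw [norm_pow, Complex.norm_real, Real.norm_of_nonneg hxpos.le]
      rw [hnx]
      exact mul_le_mul_of_nonneg_right h (by positivity)
    have hgt : ∀ t ∈ Set.Ioo (0:ℝ) b, ‖g t‖ ≤ δ / 2 * t ^ (j + 1) := by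
      intro t ht
      have htpos := ht.1
      have hlim : Tendsto (fun s : ℝ => ‖g t - g s‖) (𝓝[>] 0) (𝓝 ‖g t‖) := by
        have := (tendsto_const_nhds (x := g t) (f := 𝓝[>] (0:ℝ))).sub hg0
        simpa using this.norm
      refine le_of_tendsto hlim ?_
      filter_upwards [Ioo_mem_nhdsGT_of_mem (by constructor <;> simp [htpos] : (0:ℝ) ∈ Set.Ico 0 t)] with s hs
      -- s ∈ Ioo 0 t
      have hst : s < t := hs.2
      have hspos := hs.1
      have hsub : Set.Icc s t ⊆ Set.Ioo (0:ℝ) b := fun x hx =>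
        ⟨lt_of_lt_of_le hspos hx.1, lt_of_le_of_lt hx.2 ht.2⟩
      have hderiv : ∀ x ∈ Set.Icc s t,
          HasDerivWithinAt g (deriv f x - C * (x : ℂ) ^ j) (Set.Icc s t) x := by
        intro x hx
        have hxb := hsub hx
        have hxε : x ∈ Set.Ioo (0:ℝ) ε :=
          ⟨hxb.1, lt_of_lt_of_le hxb.2 (min_le_right a ε)⟩
        exact (hg' x hxε).hasDerivWithinAt
      have hbd : ∀ x ∈ Set.Icc s t, ‖deriv f x - C * (x : ℂ) ^ j‖ ≤ δ / 2 * t ^ j := by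
        intro x hx
        have hxb := hsub hx
        refine le_trans (hbound x hxb) ?_
        have : x ^ j ≤ t ^ j := pow_le_pow_left₀ hxb.1.le hx.2 j
        nlinarith
      have := (convex_Icc s t).norm_image_sub_le_of_norm_hasDerivWithin_le hderiv hbd
        (Set.left_mem_Icc.mpr hst.le) (Set.right_mem_Icc.mpr hst.le)
      calc ‖g t - g s‖ ≤ δ / 2 * t ^ j * ‖t - s‖ := this
        _ ≤ δ / 2 * t ^ j * t := by
            have : ‖t - s‖ ≤ t := by
              rw [Real.norm_of_nonneg (by linarith)]; linarith
            exact mul_le_mul_of_nonneg_left this (by positivity)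
        _ = δ / 2 * t ^ (j + 1) := by ring
    filter_upwards [Ioo_mem_nhdsGT_of_mem (by constructor <;> simp [hb0] : (0:ℝ) ∈ Set.Ico 0 b)] with t ht
    have htpos := ht.1
    have hnorm : ‖g t / (t : ℂ) ^ (j + 1)‖ = ‖g t‖ / t ^ (j + 1) := by
      rw [norm_div, norm_pow, Complex.norm_real, Real.norm_of_nonneg htpos.le]
    rw [hnorm]
    have h1 := hgt t ht
    have h2 : (0:ℝ) < t ^ (j + 1) := pow_pos htpos _
    calc ‖g t‖ / t ^ (j + 1) ≤ δ / 2 := by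
          rw [div_le_iff₀ h2]; linarith
      _ < δ := by linarith
  -- conclude
  have heq : ∀ᶠ t in 𝓝[>] (0:ℝ),
      g t / (t : ℂ) ^ (j + 1) + C / ((j : ℂ) + 1) = f t / (t : ℂ) ^ (j + 1) := by
    filter_upwards [self_mem_nhdsWithin] with t (ht : 0 < t)
    have hc : ((t : ℂ)) ^ (j + 1) ≠ 0 := by
      simp [Complex.ofReal_ne_zero.mpr (ne_of_gt ht)]
    simp only [hgdef]
    field_simp [hgdef]
    ring
  have := hgz.add (tendsto_const_nhds (x := C / ((j : ℂ) + 1)))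
  rw [zero_add] at this
  exact this.congr' heq

theorem valuation_deriv (f : ℝ → ℂ) (ε : ℝ) (hε : 0 < ε)
    (hdiff : ∀ t ∈ Set.Ioo 0 ε, DifferentiableAt ℝ f t)
    (k : ℕ) (hk : 1 ≤ k) (hval : HasValuation f k)
    (M : ℂ) (hM : M ≠ 0)
    (hMlim : Tendsto (fun t : ℝ => f t / (t : ℂ) ^ k) (𝓝[>] 0) (𝓝 M))
    (L : ℂ)
    (hLlim : Tendsto (fun t : ℝ => deriv f t / (t : ℂ) ^ (k - 1)) (𝓝[>] 0) (𝓝 L)) :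
    HasValuation (deriv f) (k - 1) ∧ L = (k : ℂ) * M := by
  have hf0 : Tendsto f (𝓝[>] 0) (𝓝 0) := by
    have hp : Tendsto (fun t : ℝ => ((t : ℂ)) ^ k) (𝓝[>] 0) (𝓝 0) := by
      have : ContinuousAt (fun t : ℝ => ((t : ℂ)) ^ k) 0 := by fun_prop
      have h := (this.continuousWithinAt (s := Set.Ioi (0:ℝ))).tendsto
      simpa [zero_pow (by omega : k ≠ 0)] using h
    have := hMlim.mul hp
    rw [mul_zero] at this
    refine this.congr' ?_
    filter_upwards [self_mem_nhdsWithin] with t (ht : 0 < t)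
    have hc : ((t : ℂ)) ^ k ≠ 0 := by
      simp [Complex.ofReal_ne_zero.mpr (ne_of_gt ht)]
    field_simp
  have hkey := key_lhopital f ε hε hdiff hf0 (k - 1) L hLlim
  have hk1 : k - 1 + 1 = k := Nat.succ_pred_eq_of_pos hk
  have hkc : ((k - 1 : ℕ) : ℂ) + 1 = (k : ℂ) := by
    rw [← Nat.cast_add_one, hk1]
  rw [hk1, hkc] at hkey
  have hLM : L / (k : ℂ) = M := tendsto_nhds_unique hkey hMlim
  have hkne : (k : ℂ) ≠ 0 := Nat.cast_ne_zero.mpr (by omega)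
  have hLkM : L = (k : ℂ) * M := by
    field_simp at hLM
    linear_combination hLM
  refine ⟨⟨⟨L, ?_, hLlim⟩, ?_⟩, hLkM⟩
  · rw [hLkM]
    exact mul_ne_zero hkne hM
  · intro j hj ⟨L', hL', hL'lim⟩
    have hkey' := key_lhopital f ε hε hdiff hf0 j L' hL'lim
    have hjc : ((j : ℂ) + 1) ≠ 0 := by
      exact_mod_cast Nat.cast_add_one_ne_zero (R := ℂ) j
    exact hval.2 (j + 1) (by omega) ⟨L' / ((j : ℂ) + 1), div_ne_zero hL' hjc, hkey'⟩
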